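/- arXiv:0809.0076 — 7 statements merged into one kernel-verified Lean document; each statement's English description precedes it below -/
import Mathlib

section
/- det(A_n) = Σ_{k=1}^{n} w(k) b(k), where b is the Dirichlet inverse of a. -/
/-- The Dirichlet matrix `D_n` attached to the coefficient sequence `a`:
its `(i,j)` entry (with `1 ≤ i, j ≤ n`, realized via `Fin n` shifted by one)
is `a (j / i)` if `i ∣ j` and `0` otherwise. -/
def Dmat (n : ℕ) (a : ℕ → ℂ) : Matrix (Fin n) (Fin n) ℂ :=
  fun i j => if (i.val + 1) ∣ (j.val + 1) then a ((j.val + 1) / (i.val + 1)) else 0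

/-- The weight matrix `W_n`: its `(i,1)` entry is `w i` for `2 ≤ i ≤ n`
and all other entries are `0`. -/
def Wmat (n : ℕ) (w : ℕ → ℂ) : Matrix (Fin n) (Fin n) ℂ :=
  fun i j => if j.val = 0 ∧ i.val ≠ 0 then w (i.val + 1) else 0

/-- `A_n = W_n + D_n`. -/
def Amat (n : ℕ) (a w : ℕ → ℂ) : Matrix (Fin n) (Fin n) ℂ :=
  Wmat n w + Dmat n a

lemma key_sum (n : ℕ) (a b : ℕ → ℂ) (i j : Fin n) (hij : (i.val+1) ∣ (j.val+1)) :
    ∑ k ∈ Finset.range n, (if (i.val+1) ∣ (k+1) ∧ (k+1) ∣ (j.val+1)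
      then a ((k+1)/(i.val+1)) * b ((j.val+1)/(k+1)) else 0)
    = ∑ d ∈ ((j.val+1)/(i.val+1)).divisors, a d * b (((j.val+1)/(i.val+1)) / d) := by
  set I := i.val + 1 with hI
  set J := j.val + 1 with hJ
  set m := J / I with hm
  have hI0 : 0 < I := Nat.succ_pos _
  have hIm : I * m = J := Nat.mul_div_cancel' hij
  have hm0 : 0 < m := Nat.div_pos (Nat.le_of_dvd (by omega) hij) hI0
  have hJn : J ≤ n := j.isLt
  rw [← Finset.sum_filter]
  refine Finset.sum_nbij' (fun k => (k+1)/I) (fun d => I*d - 1) ?_ ?_ ?_ ?_ ?_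
  · intro k hk
    simp only [Finset.mem_filter, Finset.mem_range] at hk
    obtain ⟨hkn, h1, h2⟩ := hk
    obtain ⟨d, hd⟩ := h1
    rw [hd, Nat.mul_div_cancel_left _ hI0, Nat.mem_divisors]
    rw [hd, ← hIm] at h2
    exact ⟨(mul_dvd_mul_iff_left (by omega : I ≠ 0)).mp h2, by omega⟩
  · intro d hd
    rw [Nat.mem_divisors] at hd
    have hdm : d ∣ m := hd.1
    have hd1 : 1 ≤ d := Nat.one_le_iff_ne_zero.mpr (by rintro rfl; exact hd.2 (zero_dvd_iff.mp hdm))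
    have hle : I * d ≤ J := by rw [← hIm]; exact Nat.mul_le_mul_left I (Nat.le_of_dvd hm0 hdm)
    have hId : 0 < I * d := Nat.mul_pos hI0 hd1
    simp only [Finset.mem_filter, Finset.mem_range]
    have h1 : I * d - 1 + 1 = I * d := by omega
    refine ⟨by omega, ?_, ?_⟩
    · rw [h1]; exact Dvd.intro d rfl
    · rw [h1, ← hIm]; exact mul_dvd_mul_left I hdm
  · intro k hk
    simp only [Finset.mem_filter, Finset.mem_range] at hk
    obtain ⟨hkn, h1, h2⟩ := hk
    obtain ⟨d, hd⟩ := h1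
    rw [hd, Nat.mul_div_cancel_left _ hI0]
    omega
  · intro d hd
    rw [Nat.mem_divisors] at hd
    have hd1 : 1 ≤ d := Nat.one_le_iff_ne_zero.mpr (by rintro rfl; exact hd.2 (zero_dvd_iff.mp hd.1))
    have hId : 0 < I * d := Nat.mul_pos hI0 hd1
    have h1 : I * d - 1 + 1 = I * d := by omega
    rw [h1, Nat.mul_div_cancel_left _ hI0]
  · intro k hk
    simp only [Finset.mem_filter, Finset.mem_range] at hk
    obtain ⟨hkn, h1, h2⟩ := hk
    obtain ⟨d, hd⟩ := h1
    rw [hd, Nat.mul_div_cancel_left _ hI0, ← hIm, Nat.mul_div_mul_left _ _ hI0]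

lemma Dmat_mul (n : ℕ) (a b : ℕ → ℂ) (ha : a 1 = 1) (hb1 : b 1 = 1)
    (hb : ∀ k : ℕ, 1 < k → ∑ d ∈ k.divisors, a d * b (k / d) = 0) :
    Dmat n a * Dmat n b = 1 := by
  ext i j
  rw [Matrix.mul_apply]
  have step : ∀ k : Fin n, Dmat n a i k * Dmat n b k j
      = if (i.val+1) ∣ (k.val+1) ∧ (k.val+1) ∣ (j.val+1)
        then a ((k.val+1)/(i.val+1)) * b ((j.val+1)/(k.val+1)) else 0 := by
    intro k
    simp only [Dmat]
    by_cases h1 : (i.val+1) ∣ (k.val+1) <;> by_cases h2 : (k.val+1) ∣ (j.val+1) <;>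
      simp [h1, h2]
  simp only [step]
  rw [Fin.sum_univ_eq_sum_range (fun k => if (i.val+1) ∣ (k+1) ∧ (k+1) ∣ (j.val+1)
        then a ((k+1)/(i.val+1)) * b ((j.val+1)/(k+1)) else 0)]
  by_cases hij : (i.val+1) ∣ (j.val+1)
  · rw [key_sum n a b i j hij]
    set m := (j.val+1)/(i.val+1) with hm
    have hIm : (i.val+1) * m = j.val+1 := Nat.mul_div_cancel' hij
    have hm0 : 1 ≤ m := by
      rcases Nat.eq_zero_or_pos m with h | h
      · rw [h, Nat.mul_zero] at hIm; omega
      · exact h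
    rcases eq_or_lt_of_le hm0 with h1 | h1
    · have hm1 : m = 1 := h1.symm
      rw [hm1, Nat.mul_one] at hIm
      have hij' : i = j := by ext; omega
      subst hij'
      rw [hm1]
      simp [Matrix.one_apply, ha, hb1]
    · have hne : i ≠ j := by
        intro h; subst h
        have : (i.val+1) * m = (i.val+1) * 1 := by omega
        have := Nat.eq_of_mul_eq_mul_left (Nat.succ_pos _) this
        omega
      rw [hb m h1, Matrix.one_apply_ne hne]
  · have hne : i ≠ j := by rintro rfl; exact hij dvd_rfl
    rw [Matrix.one_apply_ne hne, Finset.sum_eq_zero]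
    intro k hk
    rw [if_neg]
    rintro ⟨h1, h2⟩
    exact hij (h1.trans h2)

lemma Dmat_det (n : ℕ) (b : ℕ → ℂ) (hb1 : b 1 = 1) : (Dmat n b).det = 1 := by
  have htri : (Dmat n b).BlockTriangular id := by
    intro i j hij
    simp only [id_eq] at hij
    rw [Dmat, if_neg]
    intro h
    have := Nat.le_of_dvd (Nat.succ_pos _) h
    omega
  rw [Matrix.det_of_upperTriangular htri]
  rw [Finset.prod_eq_one]
  intro i _
  simp [Dmat, hb1]

/-- `det A_n = ∑_{k=1}^{n} w k * b k`, where `b` is the Dirichlet inverse of `a`. -/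
theorem det_Amat (n : ℕ) (hn : 1 ≤ n) (a w b : ℕ → ℂ) (ha : a 1 = 1) (hw : w 1 = 1)
    (hb1 : b 1 = 1) (hb : ∀ k : ℕ, 1 < k → ∑ d ∈ k.divisors, a d * b (k / d) = 0) :
    (Amat n a w).det = ∑ k ∈ Finset.Icc 1 n, w k * b k := by
  have hDB : Dmat n a * Dmat n b = 1 := Dmat_mul n a b ha hb1 hb
  have hBD : Dmat n b * Dmat n a = 1 := mul_eq_one_comm.mp hDB
  have hdetB : (Dmat n b).det = 1 := Dmat_det n b hb1
  set v : Fin n → ℂ := fun i => ∑ k : Fin n, Dmat n b i k * w (k.val + 1) with hv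
  set M : Matrix (Fin n) (Fin n) ℂ :=
    Matrix.of fun i j => if j.val = 0 then v i else (1 : Matrix (Fin n) (Fin n) ℂ) i j with hMdef
  have hAcol : ∀ (k j : Fin n), j.val = 0 → Amat n a w k j = w (k.val + 1) := by
    intro k j hj
    simp only [Amat, Wmat, Dmat, Matrix.add_apply, hj]
    by_cases hk : k.val = 0
    · have : (k.val + 1) ∣ (j.val + 1) := by rw [hk, hj]
      simp [hk, this, hj, ha, hw]
    · have hnd : ¬ (k.val + 1) ∣ (j.val + 1) := by
        rw [hj]; intro h; have := Nat.le_of_dvd one_pos h; omega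
      simp [hk, hnd]
  have hM : Dmat n b * Amat n a w = M := by
    ext i j
    rw [Matrix.mul_apply, hMdef, Matrix.of_apply]
    by_cases hj : j.val = 0
    · rw [if_pos hj, hv]
      exact Finset.sum_congr rfl fun k _ => by rw [hAcol k j hj]
    · rw [if_neg hj, ← hBD, Matrix.mul_apply]
      refine Finset.sum_congr rfl fun k _ => ?_
      congr 1
      simp only [Amat, Wmat, Matrix.add_apply]
      rw [if_neg, zero_add]
      exact fun h => hj h.1
  have htri : M.BlockTriangular OrderDual.toDual := by
    intro i j hij
    have hij' : i < j := hij
    have hj : j.val ≠ 0 := by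
      have := hij'
      simp only [Fin.lt_def] at this
      omega
    rw [hMdef, Matrix.of_apply, if_neg hj, Matrix.one_apply_ne (Fin.ne_of_lt hij')]
  have hdetM : M.det = v ⟨0, hn⟩ := by
    rw [Matrix.det_of_lowerTriangular M htri]
    rw [Finset.prod_eq_single ⟨0, hn⟩]
    · simp [hMdef]
    · intro i _ hi
      have hi0 : i.val ≠ 0 := fun h => hi (by ext; exact h)
      rw [hMdef, Matrix.of_apply, if_neg hi0, Matrix.one_apply_eq]
    · intro h; exact absurd (Finset.mem_univ _) h
  have hdetA : (Amat n a w).det = M.det := by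
    rw [← hM, Matrix.det_mul, hdetB, one_mul]
  rw [hdetA, hdetM, hv]
  have h0 : ∀ k : Fin n, Dmat n b ⟨0, hn⟩ k * w (k.val + 1) = w (k.val + 1) * b (k.val + 1) := by
    intro k
    simp only [Dmat, Nat.zero_add, Nat.one_dvd, if_true, Nat.div_one]
    ring
  simp only [h0]
  rw [Fin.sum_univ_eq_sum_range (fun k => w (k + 1) * b (k + 1))]
  rw [← Finset.Ico_add_one_right_eq_Icc, Finset.sum_Ico_eq_sum_range]
  simp [add_comm]
end

section
/- det(Ã_n) = Σ_{k=1}^{n} w(k) a(k), where Ã_n = W_n + D_n^{-1}. -/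
/-- `Ã_n = W_n + D_n⁻¹`. -/
noncomputable def Atilde (n : ℕ) (a w : ℕ → ℂ) : Matrix (Fin n) (Fin n) ℂ :=
  Wmat n w + (Dmat n a)⁻¹

/-- `det Ã_n = ∑_{k=1}^{n} w k * a k`, where `Ã_n = W_n + D_n⁻¹`. -/
theorem det_Atilde (n : ℕ) (hn : 1 ≤ n) (a w : ℕ → ℂ) (ha : a 1 = 1) (hw : w 1 = 1) :
    (Atilde n a w).det = ∑ k ∈ Finset.Icc 1 n, w k * a k := by
  set z : Fin n := ⟨0, hn⟩ with hz
  have hBT : (Dmat n a).BlockTriangular id := by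
    intro i j h
    simp only [Dmat]
    rw [if_neg]
    intro hd
    have := Nat.le_of_dvd (by omega) hd
    simp only [id] at h
    omega
  have hdet : (Dmat n a).det = 1 := by
    rw [Matrix.det_of_upperTriangular hBT]
    apply Finset.prod_eq_one
    intro i _
    simp [Dmat, ha]
  have hUnit : IsUnit (Dmat n a).det := by rw [hdet]; exact isUnit_one
  have key : (Atilde n a w).det = ((Dmat n a) * Atilde n a w).det := by
    rw [Matrix.det_mul, hdet, one_mul]
  set c : Fin n → ℂ := fun i => (Dmat n a * Wmat n w + 1) i z with hc
  have hmul : Dmat n a * Atilde n a w = Matrix.updateCol 1 z c := by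
    have h1 : Dmat n a * Atilde n a w = Dmat n a * Wmat n w + 1 := by
      rw [Atilde, Matrix.mul_add, Matrix.mul_nonsing_inv _ hUnit]
    rw [h1]
    ext i j
    rw [Matrix.updateCol_apply]
    by_cases hj : j = z
    · simp [hj, hc]
    · have hj0 : j.val ≠ 0 := by
        intro h0
        exact hj (Fin.ext h0)
      simp only [if_neg hj, Matrix.add_apply, Matrix.mul_apply]
      have : ∀ k : Fin n, Dmat n a i k * Wmat n w k j = 0 := by
        intro k
        simp [Wmat, hj0]
      rw [Finset.sum_eq_zero fun k _ => this k, zero_add]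
  rw [key, hmul, ← Matrix.cramer_apply, Matrix.cramer_one]
  have hcz : c z = ∑ k : Fin n, w (k.val + 1) * a (k.val + 1) := by
    rw [hc]
    simp only [Matrix.add_apply, Matrix.mul_apply, Matrix.one_apply_eq]
    have hD : ∀ k : Fin n, Dmat n a z k = a (k.val + 1) := by
      intro k
      simp [Dmat, hz]
    have hW : ∀ k : Fin n, Wmat n w k z = if k.val ≠ 0 then w (k.val + 1) else 0 := by
      intro k
      simp [Wmat, hz]
    calc (∑ k : Fin n, Dmat n a z k * Wmat n w k z) + 1
        = (∑ k : Fin n, if k.val ≠ 0 then w (k.val + 1) * a (k.val + 1) else 0) + 1 := by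
          congr 1
          apply Finset.sum_congr rfl
          intro k _
          rw [hD, hW]
          by_cases h : k.val ≠ 0 <;> simp [h, mul_comm]
      _ = ∑ k : Fin n, w (k.val + 1) * a (k.val + 1) := by
          have h1 : (∑ k : Fin n, if k = z then (1:ℂ) else 0) = 1 :=
            Finset.sum_ite_eq' Finset.univ z (fun _ => (1:ℂ)) |>.trans (by simp)
          rw [← h1, ← Finset.sum_add_distrib]
          apply Finset.sum_congr rfl
          intro k _
          by_cases h : k = z
          · subst h; simp [hz, ha, hw]
          · have : k.val ≠ 0 := fun h0 => h (Fin.ext h0)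
            simp [h, this]
  rw [Module.End.one_apply, hcz]
  rw [Finset.sum_bij (fun (k : Fin n) _ => k.val + 1)]
  · intro k _
    simp [Finset.mem_Icc]
  · intro k1 _ k2 _ h
    exact Fin.ext (by omega)
  · intro m hm
    simp [Finset.mem_Icc] at hm
    exact ⟨⟨m - 1, by omega⟩, Finset.mem_univ _, by simp; omega⟩
  · intro k _
    rfl
end

section
/- det(C_n) = Σ_{k=1}^{n} μ(k), the Mertens function at n. -/
open Finset ArithmeticFunction
open ArithmeticFunction.Moebius ArithmeticFunction.zeta

lemma sum_div_moebius (q : ℕ) :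
    (∑ d ∈ q.divisors, (μ d : ℤ)) = if q = 1 then 1 else 0 := by
  have h : ((μ * ζ : ArithmeticFunction ℤ)) q = ∑ d ∈ q.divisors, (μ d : ℤ) :=
    coe_mul_zeta_apply
  rw [moebius_mul_coe_zeta, one_apply] at h
  exact h.symm

lemma mertens_inner_sum (i m : ℕ) (hi : 0 < i) (him : i ∣ m) (hm : 0 < m) :
    (∑ d ∈ m.divisors.filter (i ∣ ·), (μ (m / d) : ℤ)) = if m = i then 1 else 0 := by
  have key : (∑ d ∈ m.divisors.filter (i ∣ ·), (μ (m / d) : ℤ))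
      = ∑ e ∈ (m / i).divisors, (μ e : ℤ) := by
    refine Finset.sum_nbij' (fun d => m / d) (fun e => m / e) ?_ ?_ ?_ ?_ ?_
    · intro d hd
      simp only [mem_filter, Nat.mem_divisors] at hd
      obtain ⟨⟨hdm, _⟩, hid⟩ := hd
      rw [Nat.mem_divisors]
      constructor
      · show m / d ∣ m / i
        rw [Nat.dvd_div_iff_mul_dvd him]
        show i * (m / d) ∣ m
        rw [mul_comm]
        calc m / d * i ∣ m / d * d := mul_dvd_mul_left _ hid
          _ = m := Nat.div_mul_cancel hdm
      · exact (Nat.div_pos (Nat.le_of_dvd hm him) hi).ne'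
    · intro e he
      rw [Nat.mem_divisors] at he
      obtain ⟨hem, _⟩ := he
      have hedvd : e ∣ m := hem.trans (Nat.div_dvd_of_dvd him)
      simp only [mem_filter, Nat.mem_divisors]
      refine ⟨⟨Nat.div_dvd_of_dvd hedvd, hm.ne'⟩, ?_⟩
      rw [Nat.dvd_div_iff_mul_dvd hedvd]
      rw [Nat.dvd_div_iff_mul_dvd him] at hem
      rwa [mul_comm]
    · intro d hd
      simp only [mem_filter, Nat.mem_divisors] at hd
      exact Nat.div_div_self hd.1.1 hm.ne'
    · intro e he
      rw [Nat.mem_divisors] at he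
      exact Nat.div_div_self (he.1.trans (Nat.div_dvd_of_dvd him)) hm.ne'
    · intro d hd; rfl
  rw [key, sum_div_moebius]
  have : m / i = 1 ↔ m = i := by
    constructor
    · intro h
      have := Nat.div_mul_cancel him
      rw [h, one_mul] at this; omega
    · intro h; subst h; exact Nat.div_self hi
  simp [this]

/-- The `n × n` Redheffer matrix: its `(i,j)` entry (with `1 ≤ i, j ≤ n`, realized via
`Fin n` shifted by one) is `1` if `j = 1` or `i ∣ j`, and `0` otherwise. -/
def Cmat (n : ℕ) : Matrix (Fin n) (Fin n) ℤ :=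
  fun i j => if j.val = 0 ∨ (i.val + 1) ∣ (j.val + 1) then 1 else 0

/-- `det C_n = ∑_{k=1}^{n} μ(k)`, the Mertens function at `n`. -/
theorem det_Cmat (n : ℕ) (hn : 1 ≤ n) :
    (Cmat n).det = ∑ k ∈ Finset.Icc 1 n, ArithmeticFunction.moebius k := by
  set z : Fin n := ⟨0, hn⟩ with hz
  set M : Matrix (Fin n) (Fin n) ℤ :=
    fun i j => if (i.val + 1) ∣ (j.val + 1) then 1 else 0 with hM
  set c : Fin n → ℤ := fun k => ∑ m : Fin n,
    if (k.val + 1) ∣ (m.val + 1) then (μ ((m.val + 1) / (k.val + 1)) : ℤ) else 0 with hc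
  set E : Matrix (Fin n) (Fin n) ℤ := (1 : Matrix (Fin n) (Fin n) ℤ).updateCol z c with hE
  have hfac : Cmat n = M * E := by
    ext i j
    rw [Matrix.mul_apply]
    by_cases hj : j = z
    · subst hj
      have hCz : Cmat n i z = 1 := by simp [Cmat, hz]
      have hEk : ∀ k, E k z = c k := fun k => by
        rw [hE, Matrix.updateCol_apply, if_pos rfl]
      simp only [hEk, hCz]
      -- turn each product into a double sum with combined ite
      have step1 : ∀ k : Fin n, M i k * c k = ∑ m : Fin n,
          if (i.val + 1) ∣ (k.val + 1) ∧ (k.val + 1) ∣ (m.val + 1)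
          then (μ ((m.val + 1) / (k.val + 1)) : ℤ) else 0 := by
        intro k
        rw [hc, Finset.mul_sum]
        refine Finset.sum_congr rfl fun m _ => ?_
        rw [hM]
        by_cases h1 : (i.val + 1) ∣ (k.val + 1) <;>
          by_cases h2 : (k.val + 1) ∣ (m.val + 1) <;>
          simp [h1, h2]
      simp only [step1]
      rw [Finset.sum_comm]
      have step2 : ∀ m : Fin n, (∑ k : Fin n,
          if (i.val + 1) ∣ (k.val + 1) ∧ (k.val + 1) ∣ (m.val + 1)
          then (μ ((m.val + 1) / (k.val + 1)) : ℤ) else 0)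
          = if m = i then 1 else 0 := by
        intro m
        rw [Finset.sum_ite, Finset.sum_const_zero, add_zero]
        have hbij : (∑ k ∈ Finset.univ.filter (fun k : Fin n =>
              (i.val + 1) ∣ (k.val + 1) ∧ (k.val + 1) ∣ (m.val + 1)),
              (μ ((m.val + 1) / (k.val + 1)) : ℤ))
            = ∑ d ∈ (m.val + 1).divisors.filter ((i.val + 1) ∣ ·),
              (μ ((m.val + 1) / d) : ℤ) := by
          have hmn : m.val + 1 ≤ n := m.isLt
          refine Finset.sum_nbij' (fun k => k.val + 1)
            (fun d => ⟨min (d - 1) (n - 1), by omega⟩) ?_ ?_ ?_ ?_ ?_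
          · intro k hk
            simp only [Finset.mem_filter, Finset.mem_univ, true_and] at hk
            simp only [Finset.mem_filter, Nat.mem_divisors]
            exact ⟨⟨hk.2, Nat.succ_ne_zero _⟩, hk.1⟩
          · intro d hd
            simp only [Finset.mem_filter, Nat.mem_divisors] at hd
            obtain ⟨⟨hdm, _⟩, hid⟩ := hd
            have hd1 : 1 ≤ d := Nat.pos_of_dvd_of_pos hdm (Nat.succ_pos _)
            have hdle : d ≤ m.val + 1 := Nat.le_of_dvd (Nat.succ_pos _) hdm
            have : min (d - 1) (n - 1) = d - 1 := by omega
            simp only [Finset.mem_filter, Finset.mem_univ, true_and, this]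
            constructor
            · have : d - 1 + 1 = d := by omega
              rw [this]; exact hid
            · have : d - 1 + 1 = d := by omega
              rw [this]; exact hdm
          · intro k hk
            simp only [Finset.mem_filter, Finset.mem_univ, true_and] at hk
            have : k.val + 1 ≤ n := k.isLt
            apply Fin.ext
            simp only
            omega
          · intro d hd
            simp only [Finset.mem_filter, Nat.mem_divisors] at hd
            obtain ⟨⟨hdm, _⟩, hid⟩ := hd
            have hd1 : 1 ≤ d := Nat.pos_of_dvd_of_pos hdm (Nat.succ_pos _)
            have hdle : d ≤ m.val + 1 := Nat.le_of_dvd (Nat.succ_pos _) hdm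
            simp only
            omega
          · intro k hk
            rfl
        by_cases him : (i.val + 1) ∣ (m.val + 1)
        · rw [hbij, mertens_inner_sum _ _ (Nat.succ_pos _) him (Nat.succ_pos _)]
          by_cases hmi : m = i
          · simp [hmi]
          · have : ¬ (m.val + 1 = i.val + 1) := fun h => hmi (Fin.ext (by omega))
            simp [this, hmi, Fin.val_inj]
        · have hmi : m ≠ i := fun h => him (h ▸ dvd_refl _)
          rw [hbij]
          rw [Finset.sum_eq_zero, if_neg hmi]
          intro d hd
          simp only [Finset.mem_filter, Nat.mem_divisors] at hd
          exact absurd (hd.2.trans hd.1.1) him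
      simp only [step2]
      rw [Finset.sum_ite_eq' Finset.univ i]
      simp
    · have hCj : Cmat n i j = M i j := by
        have : j.val ≠ 0 := fun h => hj (Fin.ext h)
        simp [Cmat, hM, this]
      have hEk : ∀ k, E k j = if k = j then 1 else 0 := fun k => by
        rw [hE, Matrix.updateCol_apply, if_neg hj, Matrix.one_apply]
      simp only [hEk, hCj, mul_ite, mul_one, mul_zero]
      rw [Finset.sum_ite_eq' Finset.univ j]
      simp
  rw [hfac, Matrix.det_mul]
  have hdetM : M.det = 1 := by
    rw [Matrix.det_of_upperTriangular (M := M) ?ht]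
    · simp [hM]
    · intro i j hij
      rw [hM]
      have hji : (j : ℕ) < (i : ℕ) := hij
      exact if_neg (fun hdvd => absurd (Nat.le_of_dvd (Nat.succ_pos _) hdvd) (by omega))
  rw [hdetM, one_mul, hE, ← Matrix.cramer_apply, Matrix.cramer_one]
  have hcz : c z = ∑ k : Fin n, (μ (k.val + 1) : ℤ) := by
    rw [hc]
    refine Finset.sum_congr rfl fun k _ => ?_
    simp [hz]
  show c z = _
  rw [hcz, Fin.sum_univ_eq_sum_range (fun k => (μ (k + 1) : ℤ)), ]
  rw [show Finset.Icc 1 n = Finset.Ico 1 (n+1) from (Finset.Ico_add_one_right_eq_Icc 1 n).symm]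
  rw [Finset.sum_Ico_eq_sum_range]
  simp [Nat.add_comm]
end

section
/- The characteristic polynomial p_n(x) = det(xI_n − A_n) equals (x−1)^{n−r−1} · ((x−1)^{r+1} − Σ_{k=1}^{r} v(n,k)(x−1)^{r−k}), where r = ⌊log₂ n⌋. -/
/-- `dcoef a m k`: the sum of `∏ a ℓᵢ` over `k`-tuples of integers `ℓᵢ ≥ 2`
with product `m`. -/
noncomputable def dcoef (a : ℕ → ℂ) (m k : ℕ) : ℂ :=
  ∑ t ∈ (Fintype.piFinset fun _ : Fin k => Finset.Icc 2 m).filter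
      (fun t => ∏ i, t i = m), ∏ i, a (t i)

/-- `vcoef a w m k = ∑_{j=1}^{m} w j * d(j,k)`. -/
noncomputable def vcoef (a w : ℕ → ℂ) (m k : ℕ) : ℂ :=
  ∑ j ∈ Finset.Icc 1 m, w j * dcoef a j k

open Polynomial Matrix Finset

/-- The strictly-upper-triangular "nilpotent part" of the charmatrix of `Dmat`. -/
noncomputable def Nmat (n : ℕ) (a : ℕ → ℂ) : Matrix (Fin n) (Fin n) (Polynomial ℂ) :=
  fun i j => if i ≠ j ∧ (i.val + 1) ∣ (j.val + 1) then C (a ((j.val + 1) / (i.val + 1))) else 0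

lemma two_mul_le_of_dvd {d m : ℕ} (hd : d ∣ m) (hne : d ≠ m) (hm : 0 < m) : 2 * d ≤ m := by
  obtain ⟨q, rfl⟩ := hd
  rcases Nat.eq_zero_or_pos d with rfl | hd0
  · simpa using hm
  have hq : q ≠ 1 := by rintro rfl; simp at hne
  have hq0 : q ≠ 0 := by rintro rfl; simp at hm
  have : 2 ≤ q := by omega
  calc 2 * d = d * 2 := by ring
  _ ≤ d * q := Nat.mul_le_mul_left d this

lemma charmatrix_Dmat (n : ℕ) (a : ℕ → ℂ) (ha : a 1 = 1) :
    charmatrix (Dmat n a) = (X - 1 : Polynomial ℂ) • (1 : Matrix (Fin n) (Fin n) (Polynomial ℂ))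
      - Nmat n a := by
  ext i j
  by_cases h : i = j
  · subst h
    simp [charmatrix_apply, Nmat, Dmat, Nat.div_self (Nat.succ_pos i.val), ha, one_apply]
  · simp [charmatrix_apply, Nmat, Dmat, one_apply, h]
    split_ifs with hd
    · simp
    · simp

lemma Nmat_pow_support (n : ℕ) (a : ℕ → ℂ) (k : ℕ) :
    ∀ i j : Fin n, ((Nmat n a) ^ k) i j ≠ 0 → (i.val + 1) * 2 ^ k ≤ j.val + 1 := by
  induction k with
  | zero =>
    intro i j h
    rw [pow_zero] at h
    have : i = j := by
      by_contra hne
      simp [one_apply, hne] at h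
    subst this; simp
  | succ k ih =>
    intro i j h
    rw [pow_succ, mul_apply] at h
    obtain ⟨m, -, hm⟩ := Finset.exists_ne_zero_of_sum_ne_zero h
    have h1 : ((Nmat n a) ^ k) i m ≠ 0 := fun hc => hm (by simp [hc])
    have h2 : (Nmat n a) m j ≠ 0 := fun hc => hm (by simp [hc])
    have hmj : m ≠ j ∧ (m.val + 1) ∣ (j.val + 1) := by
      by_contra hc
      simp only [Nmat] at h2
      rw [if_neg hc] at h2
      exact h2 rfl
    have hlt : 2 * (m.val + 1) ≤ j.val + 1 := by
      refine two_mul_le_of_dvd hmj.2 ?_ (Nat.succ_pos _)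
      intro hc
      exact hmj.1 (Fin.ext (by omega))
    have := ih i m h1
    calc (i.val + 1) * 2 ^ (k + 1) = ((i.val + 1) * 2 ^ k) * 2 := by ring
    _ ≤ (m.val + 1) * 2 := by exact Nat.mul_le_mul_right 2 this
    _ ≤ j.val + 1 := by omega

lemma Nmat_pow_log_succ (n : ℕ) (a : ℕ → ℂ) :
    (Nmat n a) ^ (Nat.log 2 n + 1) = 0 := by
  apply Matrix.ext
  intro i j
  by_contra h
  have h1 := Nmat_pow_support n a (Nat.log 2 n + 1) i j h
  have h2 : (j.val + 1) ≤ n := j.isLt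
  have h3 : n < 2 ^ (Nat.log 2 n + 1) := Nat.lt_pow_succ_log_self (by norm_num) n
  have h4 : 2 ^ (Nat.log 2 n + 1) ≤ (i.val + 1) * 2 ^ (Nat.log 2 n + 1) :=
    Nat.le_mul_of_pos_left _ (Nat.succ_pos _)
  omega

lemma det_charmatrix_Dmat (n : ℕ) (a : ℕ → ℂ) (ha : a 1 = 1) :
    (charmatrix (Dmat n a)).det = (X - 1 : Polynomial ℂ) ^ n := by
  have hbt : (Dmat n a).BlockTriangular id := by
    intro i j hij
    simp only [id_eq] at hij
    have : ¬ (i.val + 1) ∣ (j.val + 1) := by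
      intro hd
      have := Nat.le_of_dvd (Nat.succ_pos _) hd
      have : j.val < i.val := hij
      omega
    simp [Dmat, this]
  have := Matrix.charpoly_of_upperTriangular (Dmat n a) hbt
  rw [Matrix.charpoly] at this
  rw [this]
  have : ∀ i : Fin n, (X - C ((Dmat n a) i i)) = (X - 1 : Polynomial ℂ) := by
    intro i
    simp [Dmat, Nat.div_self (Nat.succ_pos i.val), ha]
  rw [Finset.prod_congr rfl (fun i _ => this i)]
  simp

lemma adjugate_charmatrix_Dmat (n : ℕ) (hn : 1 ≤ n) (a : ℕ → ℂ) (ha : a 1 = 1) :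
    adjugate (charmatrix (Dmat n a)) =
      ∑ k ∈ range (Nat.log 2 n + 1), ((X - 1 : Polynomial ℂ) ^ (n - (k + 1))) • (Nmat n a) ^ k := by
  set r := Nat.log 2 n with hr
  set P := charmatrix (Dmat n a) with hP
  set N := Nmat n a with hN
  set B := ∑ k ∈ range (r + 1), ((X - 1 : Polynomial ℂ) ^ (n - (k + 1))) • N ^ k with hB
  have hrn : r < n := Nat.lt_of_lt_of_le (Nat.log_lt_self 2 (by omega)) le_rfl
  have hdet : P.det = (X - 1 : Polynomial ℂ) ^ n := det_charmatrix_Dmat n a ha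
  have hdet0 : P.det ≠ 0 := by
    rw [hdet]
    apply pow_ne_zero
    have : (X - 1 : Polynomial ℂ) = X - C 1 := by simp
    rw [this]
    exact X_sub_C_ne_zero 1
  have hPB : P * B = ((X - 1 : Polynomial ℂ) ^ n) • (1 : Matrix (Fin n) (Fin n) (Polynomial ℂ)) := by
    have hPexp : P = (X - 1 : Polynomial ℂ) • (1 : Matrix (Fin n) (Fin n) (Polynomial ℂ)) - N :=
      charmatrix_Dmat n a ha
    rw [hB, Finset.mul_sum]
    have hterm : ∀ k ∈ range (r + 1),
        P * (((X - 1 : Polynomial ℂ) ^ (n - (k + 1))) • N ^ k) =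
          ((X - 1 : Polynomial ℂ) ^ (n - k)) • N ^ k
            - ((X - 1 : Polynomial ℂ) ^ (n - (k + 1))) • N ^ (k + 1) := by
      intro k hk
      rw [Finset.mem_range] at hk
      have hkn : k + 1 ≤ n := by omega
      rw [hPexp, sub_mul, Matrix.smul_mul, Matrix.one_mul, smul_smul, Matrix.mul_smul]
      refine congrArg₂ (· - ·) ?_ ?_
      · refine congrArg (· • N ^ k) ?_
        rw [← pow_succ']
        exact congrArg (_ ^ ·) (by omega)
      · refine congrArg (_ • ·) ?_
        exact (pow_succ' N k).symm
    rw [Finset.sum_congr rfl hterm]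
    rw [Finset.sum_range_sub' (fun k => ((X - 1 : Polynomial ℂ) ^ (n - k)) • N ^ k)]
    have : N ^ (r + 1) = 0 := Nmat_pow_log_succ n a
    rw [this, smul_zero, sub_zero, pow_zero, Nat.sub_zero]
  have h1 : P * B = P * adjugate P := by
    rw [hPB, Matrix.mul_adjugate, hdet]
  have h2 : P.det • B = P.det • adjugate P := by
    calc P.det • B = (adjugate P * P) * B := by rw [Matrix.adjugate_mul, Matrix.smul_mul, Matrix.one_mul]
    _ = adjugate P * (P * B) := by rw [Matrix.mul_assoc]
    _ = adjugate P * (P * adjugate P) := by rw [h1]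
    _ = (adjugate P * P) * adjugate P := by rw [Matrix.mul_assoc]
    _ = P.det • adjugate P := by rw [Matrix.adjugate_mul, Matrix.smul_mul, Matrix.one_mul]
  apply Matrix.ext
  intro i j
  have := congrFun (congrFun h2 i) j
  simp only [Matrix.smul_apply, smul_eq_mul] at this
  exact (mul_left_cancel₀ hdet0 this).symm

lemma dcoef_zero (a : ℕ → ℂ) (m : ℕ) : dcoef a m 0 = if m = 1 then 1 else 0 := by
  rw [dcoef]
  split_ifs with h
  · subst h
    rw [Fintype.piFinset_of_isEmpty]
    simp
  · rw [Finset.sum_eq_zero]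
    intro t ht
    exfalso
    rw [Finset.mem_filter] at ht
    have := ht.2
    simp at this
    exact h this.symm

lemma dcoef_one (a : ℕ → ℂ) {k : ℕ} (hk : k ≠ 0) : dcoef a 1 k = 0 := by
  rw [dcoef, Finset.sum_eq_zero]
  intro t ht
  exfalso
  rw [Finset.mem_filter, Fintype.mem_piFinset] at ht
  have h0 : 0 < k := Nat.pos_of_ne_zero hk
  have := ht.1 ⟨0, h0⟩
  simp at this

lemma dcoef_flex (a : ℕ → ℂ) {m M k : ℕ} (hm : 1 ≤ m) (hM : m ≤ M) :
    ∑ t ∈ (Fintype.piFinset fun _ : Fin k => Finset.Icc 2 M).filter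
      (fun t => ∏ i, t i = m), ∏ i, a (t i) = dcoef a m k := by
  rw [dcoef]
  congr 1
  ext t
  simp only [Finset.mem_filter, Fintype.mem_piFinset, Finset.mem_Icc]
  constructor
  · rintro ⟨h1, h2⟩
    refine ⟨fun i => ⟨(h1 i).1, ?_⟩, h2⟩
    have : t i ∣ m := h2 ▸ Finset.dvd_prod_of_mem t (Finset.mem_univ i)
    exact Nat.le_of_dvd hm this
  · rintro ⟨h1, h2⟩
    exact ⟨fun i => ⟨(h1 i).1, le_trans (h1 i).2 hM⟩, h2⟩

lemma dcoef_succ (a : ℕ → ℂ) {m : ℕ} (hm : 1 ≤ m) (k : ℕ) :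
    dcoef a m (k + 1) =
      ∑ d ∈ m.divisors.filter (fun d => d ≠ m), dcoef a d k * a (m / d) := by
  have hstep : ∀ d ∈ m.divisors.filter (fun d => d ≠ m),
      dcoef a d k * a (m / d) =
        ∑ t' ∈ (Fintype.piFinset fun _ : Fin k => Finset.Icc 2 m).filter
          (fun t => ∏ i, t i = d), (∏ i, a (t' i)) * a (m / d) := by
    intro d hd
    rw [Finset.mem_filter, Nat.mem_divisors] at hd
    have hd1 : 1 ≤ d := Nat.pos_of_dvd_of_pos hd.1.1 hm
    have hdm : d ≤ m := Nat.le_of_dvd hm hd.1.1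
    rw [← dcoef_flex a hd1 hdm, Finset.sum_mul]
  rw [Finset.sum_congr rfl hstep, Finset.sum_sigma']
  rw [dcoef]
  apply Finset.sum_nbij' (fun t => (⟨∏ i : Fin k, t (Fin.castSucc i), Fin.init t⟩ :
      Σ _ : ℕ, (Fin k → ℕ)))
    (fun p => Fin.snoc p.2 (m / p.1))
  · -- forward membership
    intro t ht
    rw [Finset.mem_filter, Fintype.mem_piFinset] at ht
    obtain ⟨htmem, htprod⟩ := ht
    have hsplit : (∏ i : Fin k, t (Fin.castSucc i)) * t (Fin.last k) = m := by
      rw [← Fin.prod_univ_castSucc]; exact htprod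
    set d := ∏ i : Fin k, t (Fin.castSucc i) with hdd
    have hd0 : 0 < d := Finset.prod_pos fun i _ => by
      have := htmem (Fin.castSucc i); rw [Finset.mem_Icc] at this; omega
    have hlast : 2 ≤ t (Fin.last k) := by
      have := htmem (Fin.last k); rw [Finset.mem_Icc] at this; exact this.1
    have hdvd : d ∣ m := ⟨t (Fin.last k), hsplit.symm⟩
    have hdm : d < m := by
      have : d * 2 ≤ d * t (Fin.last k) := Nat.mul_le_mul_left d hlast
      omega
    refine Finset.mem_sigma.mpr ⟨?_, ?_⟩ <;> dsimp only
    · rw [Finset.mem_filter, Nat.mem_divisors]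
      exact ⟨⟨hdvd, by omega⟩, by omega⟩
    · rw [Finset.mem_filter, Fintype.mem_piFinset]
      exact ⟨fun i => htmem (Fin.castSucc i), rfl⟩
  · -- backward membership
    rintro ⟨d, t'⟩ hp
    rw [Finset.mem_sigma, Finset.mem_filter, Nat.mem_divisors, Finset.mem_filter,
      Fintype.mem_piFinset] at hp
    obtain ⟨⟨⟨hdvd, -⟩, hdne⟩, ht'mem, ht'prod⟩ := hp
    have hd1 : 1 ≤ d := Nat.pos_of_dvd_of_pos hdvd hm
    have hq2 : 2 ≤ m / d := by
      have h2d : 2 * d ≤ m := two_mul_le_of_dvd hdvd hdne hm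
      exact (Nat.le_div_iff_mul_le hd1).mpr (by omega)
    rw [Finset.mem_filter, Fintype.mem_piFinset]
    constructor
    · intro i
      refine Fin.lastCases ?_ ?_ i
      · rw [Fin.snoc_last, Finset.mem_Icc]
        exact ⟨hq2, Nat.div_le_self m d⟩
      · intro i'
        rw [Fin.snoc_castSucc]
        exact ht'mem i'
    · rw [Fin.prod_univ_castSucc]
      simp only [Fin.snoc_castSucc, Fin.snoc_last]
      rw [ht'prod, Nat.mul_div_cancel' hdvd]
  · -- left inverse
    intro t ht
    rw [Finset.mem_filter, Fintype.mem_piFinset] at ht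
    obtain ⟨htmem, htprod⟩ := ht
    have hsplit : (∏ i : Fin k, t (Fin.castSucc i)) * t (Fin.last k) = m := by
      rw [← Fin.prod_univ_castSucc]; exact htprod
    have hd0 : 0 < ∏ i : Fin k, t (Fin.castSucc i) := Finset.prod_pos fun i _ => by
      have := htmem (Fin.castSucc i); rw [Finset.mem_Icc] at this; omega
    have hmd : m / (∏ i : Fin k, t (Fin.castSucc i)) = t (Fin.last k) := by
      rw [← hsplit, Nat.mul_div_cancel_left _ hd0]
    show Fin.snoc (Fin.init t) _ = t
    rw [hmd]
    exact Fin.snoc_init_self t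
  · -- right inverse
    rintro ⟨d, t'⟩ hp
    rw [Finset.mem_sigma, Finset.mem_filter, Nat.mem_divisors, Finset.mem_filter,
      Fintype.mem_piFinset] at hp
    obtain ⟨⟨⟨hdvd, -⟩, hdne⟩, ht'mem, ht'prod⟩ := hp
    have h1 : ∏ i : Fin k, (Fin.snoc t' (m / d) : Fin (k+1) → ℕ) (Fin.castSucc i) = d := by
      simp only [Fin.snoc_castSucc]; exact ht'prod
    have h2 : Fin.init (Fin.snoc t' (m / d) : Fin (k+1) → ℕ) = t' := Fin.init_snoc _ _
    simp only [h1, h2]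
  · -- value equality
    intro t ht
    rw [Finset.mem_filter, Fintype.mem_piFinset] at ht
    obtain ⟨htmem, htprod⟩ := ht
    have hsplit : (∏ i : Fin k, t (Fin.castSucc i)) * t (Fin.last k) = m := by
      rw [← Fin.prod_univ_castSucc]; exact htprod
    have hd0 : 0 < ∏ i : Fin k, t (Fin.castSucc i) := Finset.prod_pos fun i _ => by
      have := htmem (Fin.castSucc i); rw [Finset.mem_Icc] at this; omega
    have hmd : m / (∏ i : Fin k, t (Fin.castSucc i)) = t (Fin.last k) := by
      rw [← hsplit, Nat.mul_div_cancel_left _ hd0]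
    show ∏ i : Fin (k+1), a (t i) = (∏ i : Fin k, a (Fin.init t i)) * a (m / _)
    rw [Fin.prod_univ_castSucc, hmd]
    rfl

lemma Nmat_pow_row_zero (n : ℕ) (hn : 0 < n) (a : ℕ → ℂ) (k : ℕ) :
    ∀ j : Fin n, ((Nmat n a) ^ k) ⟨0, hn⟩ j = C (dcoef a (j.val + 1) k) := by
  induction k with
  | zero =>
    intro j
    rw [pow_zero, dcoef_zero]
    by_cases h : j.val = 0
    · have hz : (⟨0, hn⟩ : Fin n) = j := Fin.ext (show 0 = j.val from h.symm)
      rw [hz, Matrix.one_apply_eq, if_pos (by omega), _root_.map_one]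
    · rw [Matrix.one_apply_ne, if_neg (by omega), _root_.map_zero]
      intro hc
      exact h (congrArg Fin.val hc).symm
  | succ k ih =>
    intro j
    rw [pow_succ, Matrix.mul_apply]
    rw [dcoef_succ a (Nat.succ_pos j.val) k, map_sum]
    have step1 : ∀ m : Fin n, ((Nmat n a) ^ k) ⟨0, hn⟩ m * Nmat n a m j =
        if m ≠ j ∧ (m.val + 1) ∣ (j.val + 1) then
          C (dcoef a (m.val + 1) k * a ((j.val + 1) / (m.val + 1))) else 0 := by
      intro m
      rw [ih m]
      simp only [Nmat]
      split_ifs with h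
      · rw [_root_.map_mul]
      · rw [mul_zero]
    rw [Finset.sum_congr rfl (fun m _ => step1 m), ← Finset.sum_filter]
    refine Finset.sum_nbij' (fun m : Fin n => m.val + 1)
      (fun d => (⟨(d - 1) % n, Nat.mod_lt _ hn⟩ : Fin n)) ?_ ?_ ?_ ?_ ?_
    · intro m hm
      simp only [Finset.mem_filter, Finset.mem_univ, true_and] at hm
      obtain ⟨hne, hdvd⟩ := hm
      have hvne : m.val ≠ j.val := fun hc => hne (Fin.ext hc)
      refine Finset.mem_filter.mpr ⟨Nat.mem_divisors.mpr ⟨hdvd, by omega⟩, ?_⟩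
      show m.val + 1 ≠ j.val + 1
      omega
    · intro d hd
      simp only [Finset.mem_filter, Nat.mem_divisors] at hd
      obtain ⟨⟨hdvd, -⟩, hdne⟩ := hd
      have hd1 : 1 ≤ d := Nat.pos_of_dvd_of_pos hdvd (Nat.succ_pos _)
      have hdle : d ≤ j.val + 1 := Nat.le_of_dvd (Nat.succ_pos _) hdvd
      have hjn : j.val < n := j.isLt
      have hlt : d - 1 < n := by omega
      have hmod : (d - 1) % n = d - 1 := Nat.mod_eq_of_lt hlt
      refine Finset.mem_filter.mpr ⟨Finset.mem_univ _, ?_, ?_⟩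
      · intro hc
        have := congrArg Fin.val hc
        simp only [hmod] at this
        omega
      · show ((d - 1) % n + 1) ∣ (j.val + 1)
        rw [hmod, show d - 1 + 1 = d by omega]
        exact hdvd
    · intro m hm
      apply Fin.ext
      show (m.val + 1 - 1) % n = m.val
      simp [Nat.mod_eq_of_lt m.isLt]
    · intro d hd
      simp only [Finset.mem_filter, Nat.mem_divisors] at hd
      obtain ⟨⟨hdvd, -⟩, hdne⟩ := hd
      have hd1 : 1 ≤ d := Nat.pos_of_dvd_of_pos hdvd (Nat.succ_pos _)
      have hdle : d ≤ j.val + 1 := Nat.le_of_dvd (Nat.succ_pos _) hdvd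
      have hjn : j.val < n := j.isLt
      have hlt : d - 1 < n := by omega
      show (d - 1) % n + 1 = d
      rw [Nat.mod_eq_of_lt hlt]
      omega
    · intro m hm
      rfl

set_option maxHeartbeats 1000000 in
/-- The characteristic polynomial of `A_n` is
`(x-1)^{n-r-1} ((x-1)^{r+1} - ∑_{k=1}^{r} v(n,k) (x-1)^{r-k})` with `r = ⌊log₂ n⌋`. -/
theorem charpoly_Amat (n : ℕ) (hn : 1 ≤ n) (a w : ℕ → ℂ) (ha : a 1 = 1) (hw : w 1 = 1) :
    (Amat n a w).charpoly =
      (X - 1) ^ (n - Nat.log 2 n - 1) *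
        ((X - 1) ^ (Nat.log 2 n + 1) -
          ∑ k ∈ Finset.Icc 1 (Nat.log 2 n), C (vcoef a w n k) * (X - 1) ^ (Nat.log 2 n - k)) := by
  classical
  have h0 : 0 < n := hn
  set r := Nat.log 2 n with hr
  have hrn : r < n := Nat.log_lt_self 2 (by omega)
  set z : Fin n := ⟨0, h0⟩ with hz
  set P := charmatrix (Dmat n a) with hP
  set u : Fin n → Polynomial ℂ := fun i => if i = z then 0 else C (w (i.val + 1)) with hu
  have hzval : z.val = 0 := rfl
  -- column 0 of P
  have hPz : ∀ i : Fin n, P i z = if i = z then X - 1 else 0 := by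
    intro i
    by_cases hi : i = z
    · rw [if_pos hi, hi, hP, charmatrix_apply_eq]
      have : Dmat n a z z = 1 := by
        simp [Dmat, Nat.div_self (Nat.succ_pos z.val), ha]
      rw [this, _root_.map_one]
    · rw [if_neg hi, hP, charmatrix_apply_ne _ _ _ hi]
      have : Dmat n a i z = 0 := by
        have hiv : i.val ≠ 0 := fun hc => hi (Fin.ext (hc.trans hzval.symm))
        have : ¬ (i.val + 1) ∣ (z.val + 1) := by
          rw [hzval]
          intro hd
          have := Nat.le_of_dvd (by norm_num) hd
          omega
        simp [Dmat, this]
      rw [this, map_zero, neg_zero]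
  -- the charmatrix of A is a column update of P
  have hchar : charmatrix (Amat n a w) = P.updateCol z (fun i => P i z - u i) := by
    apply Matrix.ext
    intro i j
    by_cases hj : j = z
    · rw [hj, Matrix.updateCol_apply, if_pos rfl, hPz i]
      by_cases hi : i = z
      · rw [hi, charmatrix_apply_eq, if_pos rfl, hu]
        simp only [if_pos rfl, sub_zero]
        have : Amat n a w z z = 1 := by
          simp [Amat, Wmat, Dmat, Nat.div_self (Nat.succ_pos z.val), ha]
        rw [this, _root_.map_one]
        simp
      · rw [charmatrix_apply_ne _ _ _ hi, if_neg hi, hu]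
        simp only [if_neg hi, zero_sub]
        have hiv : i.val ≠ 0 := fun hc => hi (Fin.ext (hc.trans hzval.symm))
        have : Amat n a w i z = w (i.val + 1) := by
          have hd : ¬ (i.val + 1) ∣ (z.val + 1) := by
            rw [hzval]
            intro hd
            have := Nat.le_of_dvd (by norm_num) hd
            omega
          simp [Amat, Wmat, Dmat, hzval, hiv, hd]
        rw [this]
    · rw [Matrix.updateCol_apply, if_neg hj, hP]
      have hjv : j.val ≠ 0 := fun hc => hj (Fin.ext (hc.trans hzval.symm))
      have hAD : Amat n a w i j = Dmat n a i j := by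
        simp [Amat, Wmat, hjv]
      simp only [charmatrix_apply, hAD]
  -- determinant expansion
  have hdetP : P.det = (X - 1 : Polynomial ℂ) ^ n := det_charmatrix_Dmat n a ha
  have hsplit : (Amat n a w).charpoly = P.det - (P.updateCol z u).det := by
    rw [Matrix.charpoly, hchar]
    have hfun : (fun i => P i z - u i) = (fun i => P i z) + ((-1 : Polynomial ℂ) • u) := by
      funext i
      simp [sub_eq_add_neg]
    rw [hfun, Matrix.det_updateCol_add, Matrix.det_updateCol_smul,
      Matrix.updateCol_eq_self]
    ring
  have hcr : (P.updateCol z u).det = ((adjugate P) *ᵥ u) z := by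
    rw [← Matrix.cramer_apply, Matrix.cramer_eq_adjugate_mulVec]
  have hmv : ((adjugate P) *ᵥ u) z =
      ∑ k ∈ range (r + 1), (X - 1 : Polynomial ℂ) ^ (n - (k + 1)) *
        (∑ jx : Fin n, ((Nmat n a) ^ k) z jx * u jx) := by
    rw [hP, adjugate_charmatrix_Dmat n hn a ha, ← hr]
    show ∑ jx : Fin n, (∑ k ∈ range (r + 1),
        ((X - 1 : Polynomial ℂ) ^ (n - (k + 1))) • (Nmat n a) ^ k) z jx * u jx = _
    simp only [Matrix.sum_apply, Matrix.smul_apply, smul_eq_mul, Finset.sum_mul]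
    rw [Finset.sum_comm]
    refine Finset.sum_congr rfl fun k _ => ?_
    rw [Finset.mul_sum]
    exact Finset.sum_congr rfl fun jx _ => mul_assoc _ _ _
  have hS0 : (∑ jx : Fin n, ((Nmat n a) ^ 0) z jx * u jx) = 0 := by
    apply Finset.sum_eq_zero
    intro jx _
    by_cases hx : jx = z
    · rw [hx, hu]
      simp
    · rw [pow_zero, Matrix.one_apply_ne (fun hc => hx hc.symm), zero_mul]
  have hSk : ∀ k : ℕ, k ≠ 0 →
      (∑ jx : Fin n, ((Nmat n a) ^ k) z jx * u jx) = C (vcoef a w n k) := by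
    intro k hk
    rw [vcoef, map_sum]
    have hrow : ∀ jx : Fin n, ((Nmat n a) ^ k) z jx * u jx =
        if jx = z then 0 else C (w (jx.val + 1) * dcoef a (jx.val + 1) k) := by
      intro jx
      rw [hz, Nmat_pow_row_zero n h0 a k jx]
      by_cases hx : jx = z
      · rw [if_pos hx, hu]
        simp [hx]
      · rw [if_neg hx, hu]
        simp only [if_neg hx]
        rw [← _root_.map_mul, mul_comm]
    rw [Finset.sum_congr rfl (fun jx _ => hrow jx)]
    refine Finset.sum_nbij' (fun jx : Fin n => jx.val + 1)
      (fun j' => (⟨(j' - 1) % n, Nat.mod_lt _ h0⟩ : Fin n)) ?_ ?_ ?_ ?_ ?_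
    · intro jx _
      have := jx.isLt
      rw [Finset.mem_Icc]
      omega
    · intro j' _
      exact Finset.mem_univ _
    · intro jx _
      apply Fin.ext
      show (jx.val + 1 - 1) % n = jx.val
      simp [Nat.mod_eq_of_lt jx.isLt]
    · intro j' hj'
      rw [Finset.mem_Icc] at hj'
      have hlt : j' - 1 < n := by omega
      show (j' - 1) % n + 1 = j'
      rw [Nat.mod_eq_of_lt hlt]
      omega
    · intro jx _
      by_cases hx : jx = z
      · rw [if_pos hx, hx]
        show (0 : Polynomial ℂ) = C (w (0 + 1) * dcoef a (0 + 1) k)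
        rw [show (0 : ℕ) + 1 = 1 from rfl, dcoef_one a hk, mul_zero, map_zero]
      · rw [if_neg hx]
  rw [hsplit, hcr, hmv, hdetP, Finset.sum_range_succ', hS0, mul_zero, add_zero]
  rw [Finset.sum_congr rfl (fun i (_ : i ∈ range r) => by
    rw [hSk (i + 1) (Nat.succ_ne_zero i)])]
  have e1 : (X - 1 : Polynomial ℂ) ^ (n - r - 1) * (X - 1) ^ (r + 1) = (X - 1) ^ n := by
    rw [← pow_add]
    congr 1
    omega
  rw [mul_sub, e1, Finset.mul_sum]
  congr 1
  refine Finset.sum_nbij' (fun i : ℕ => i + 1) (fun k => k - 1) ?_ ?_ ?_ ?_ ?_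
  · intro i hi
    rw [Finset.mem_range] at hi
    rw [Finset.mem_Icc]
    omega
  · intro k hk
    rw [Finset.mem_Icc] at hk
    rw [Finset.mem_range]
    omega
  · intro i _
    omega
  · intro k hk
    rw [Finset.mem_Icc] at hk
    omega
  · intro i hi
    rw [Finset.mem_range] at hi
    have e2 : (X - 1 : Polynomial ℂ) ^ (n - r - 1) * (X - 1) ^ (r - (i + 1)) =
        (X - 1) ^ (n - (i + 1 + 1)) := by
      rw [← pow_add]
      congr 1
      omega
    rw [← e2]
    ring
end

section
/- Every eigenvalue λ ≠ 1 of A_n has geometric multiplicity one; that is, the null space of A_n − λI_n is one-dimensional. -/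
/-- Every eigenvalue `λ ≠ 1` of `A_n` has geometric multiplicity one: the null space
of `A_n - λ I_n` is one-dimensional. -/
theorem geometric_multiplicity_one (n : ℕ) (hn : 2 ≤ n) (a w : ℕ → ℂ) (ha : a 1 = 1)
    (hw : w 1 = 1) (lam : ℂ) (hlam : lam ≠ 1) (heig : lam ∈ spectrum ℂ (Amat n a w)) :
    Module.finrank ℂ (LinearMap.ker (Matrix.mulVecLin (Amat n a w - lam • 1))) = 1 := by
  set M : Matrix (Fin n) (Fin n) ℂ := Amat n a w - lam • 1 with hM
  have h0lt : 0 < n := by omega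
  -- the determinant vanishes, so the kernel is nontrivial
  have hnotunit : ¬ IsUnit M := by
    rw [spectrum.mem_iff] at heig
    intro h
    apply heig
    have h2 := h.neg
    have : -M = algebraMap ℂ (Matrix (Fin n) (Fin n) ℂ) lam - Amat n a w := by
      rw [Algebra.algebraMap_eq_smul_one, hM, neg_sub]
    rwa [this] at h2
  have hdet : M.det = 0 := by
    rwa [Matrix.isUnit_iff_isUnit_det, isUnit_iff_ne_zero, not_not] at hnotunit
  obtain ⟨v0, hv0ne, hv0⟩ := (Matrix.exists_mulVec_eq_zero_iff).2 hdet
  -- key: a kernel vector with vanishing first coordinate is zero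
  have hzero : ∀ v : Fin n → ℂ, M.mulVec v = 0 → v ⟨0, h0lt⟩ = 0 → v = 0 := by
    intro v hv hfirst
    have key : ∀ m : ℕ, ∀ i : Fin n, n - i.val ≤ m → v i = 0 := by
      intro m
      induction m with
      | zero => intro i hi; exact absurd hi (by have := i.isLt; omega)
      | succ m ih =>
        intro i hi
        by_cases hi0 : i.val = 0
        · have : i = ⟨0, h0lt⟩ := Fin.ext hi0
          rw [this]; exact hfirst
        · have hrow : (M.mulVec v) i = 0 := congrFun hv i
          rw [Matrix.mulVec, dotProduct] at hrow
          have hsum : ∑ j, M i j * v j = M i i * v i := by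
            apply Finset.sum_eq_single i
            · intro j _ hji
              by_cases hj0 : j.val = 0
              · have hj : j = ⟨0, h0lt⟩ := Fin.ext hj0
                rw [hj, hfirst, mul_zero]
              · by_cases hdvd : (i.val + 1) ∣ (j.val + 1)
                · have hij : i.val < j.val := by
                    rcases hdvd with ⟨c, hc⟩
                    have hc1 : c ≠ 1 := by
                      rintro rfl
                      exact hji (Fin.ext (by omega))
                    have hc0 : c ≠ 0 := by rintro rfl; omega
                    have hc2 : 2 ≤ c := by omega
                    have := Nat.mul_le_mul_left (i.val + 1) hc2
                    omega
                  rw [ih j (by omega), mul_zero]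
                · have hMij : M i j = 0 := by
                    have hne : i ≠ j := fun h => hji h.symm
                    have h1 : (1 : Matrix (Fin n) (Fin n) ℂ) i j = 0 :=
                      Matrix.one_apply_ne hne
                    simp [hM, Amat, Wmat, Dmat, Matrix.sub_apply, Matrix.add_apply,
                      Matrix.smul_apply, h1, hj0, hdvd]
                  rw [hMij, zero_mul]
            · intro h; exact absurd (Finset.mem_univ i) h
          have hMii : M i i = 1 - lam := by
            simp [hM, Amat, Wmat, Dmat, Matrix.sub_apply, Matrix.add_apply,
              Matrix.smul_apply, Matrix.one_apply, hi0, ha]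
          rw [hsum, hMii] at hrow
          have h1lam : (1 : ℂ) - lam ≠ 0 := sub_ne_zero.mpr (Ne.symm hlam)
          exact (mul_eq_zero.mp hrow).resolve_left h1lam
    funext i
    exact key n i (by omega)
  set K := LinearMap.ker (Matrix.mulVecLin M) with hK
  have hv0mem : v0 ∈ K := by
    rw [hK, LinearMap.mem_ker, Matrix.mulVecLin_apply, hv0]
  haveI : Nontrivial K := by
    refine ⟨⟨v0, hv0mem⟩, 0, fun h => hv0ne ?_⟩
    simpa using congrArg Subtype.val h
  have hge : 1 ≤ Module.finrank ℂ K := Module.finrank_pos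
  have hle : Module.finrank ℂ K ≤ 1 := by
    have hinj : Function.Injective
        ((LinearMap.proj (⟨0, h0lt⟩ : Fin n) : (Fin n → ℂ) →ₗ[ℂ] ℂ).comp K.subtype) := by
      intro x y hxy
      have hx : (x : Fin n → ℂ) - (y : Fin n → ℂ) = 0 := by
        apply hzero
        · have hxm : M.mulVec (x : Fin n → ℂ) = 0 := x.2
          have hym : M.mulVec (y : Fin n → ℂ) = 0 := y.2
          rw [Matrix.mulVec_sub, hxm, hym, sub_zero]
        · simpa [sub_eq_zero] using hxy
      exact Subtype.ext (sub_eq_zero.mp hx)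
    calc Module.finrank ℂ K ≤ Module.finrank ℂ ℂ :=
          LinearMap.finrank_le_finrank_of_injective hinj
      _ = 1 := Module.finrank_self ℂ
  omega
end

section
/- Assume a(ℓ) = w(ℓ) = 1 for all ℓ. If k ≥ 1 and 2^k ≤ n, then v(n,k) = Σ_{i=2}^{s} v(⌊n/i⌋, k−1) + Σ_{j=2^{k−1}}^{⌊√n⌋} (⌊n/j⌋ − ⌊n/(j+1)⌋) v(j, k−1), where s = ⌊n/(⌊√n⌋+1)⌋. -/
/-- `dN m k`: the number of `k`-tuples `(ℓ₁, …, ℓ_k)` of integers with each `ℓᵢ ≥ 2`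
and `ℓ₁ ⋯ ℓ_k = m` (the case `a ≡ 1`). -/
def dN (m k : ℕ) : ℕ :=
  ((Fintype.piFinset fun _ : Fin k => Finset.Icc 2 m).filter
      (fun t => ∏ i, t i = m)).card

/-- `vN m k = ∑_{j=1}^{m} d(j,k)` (the case `a ≡ w ≡ 1`). -/
def vN (m k : ℕ) : ℕ :=
  ∑ j ∈ Finset.Icc 1 m, dN j k

/-- Auxiliary: tuples with entries ≥ 2 and product ≤ m. -/
def TS (m k : ℕ) : Finset (Fin k → ℕ) :=
  (Fintype.piFinset fun _ : Fin k => Finset.Icc 2 m).filter (fun t => ∏ i, t i ≤ m)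

lemma prod_ge_pow {k : ℕ} {t : Fin k → ℕ} (ht : ∀ i, 2 ≤ t i) :
    2 ^ k ≤ ∏ i, t i := by
  calc (2:ℕ) ^ k = ∏ _i : Fin k, 2 := by simp
    _ ≤ ∏ i, t i := Finset.prod_le_prod' (fun i _ => ht i)

lemma one_le_prod {k : ℕ} {t : Fin k → ℕ} (ht : ∀ i, 2 ≤ t i) :
    1 ≤ ∏ i, t i :=
  le_trans (Nat.one_le_two_pow) (prod_ge_pow ht)

lemma dN_eq_of_le {j m k : ℕ} (hj : 1 ≤ j) (hjm : j ≤ m) :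
    dN j k = ((Fintype.piFinset fun _ : Fin k => Finset.Icc 2 m).filter
      (fun t => ∏ i, t i = j)).card := by
  unfold dN
  congr 1
  ext t
  simp only [Finset.mem_filter, Fintype.mem_piFinset, Finset.mem_Icc]
  constructor
  · rintro ⟨h1, h2⟩
    exact ⟨fun i => ⟨(h1 i).1, le_trans (h1 i).2 hjm⟩, h2⟩
  · rintro ⟨h1, h2⟩
    refine ⟨fun i => ⟨(h1 i).1, ?_⟩, h2⟩
    have : t i ∣ ∏ i, t i := Finset.dvd_prod_of_mem t (Finset.mem_univ i)
    rw [h2] at this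
    exact Nat.le_of_dvd hj this

lemma vN_eq_card (m k : ℕ) : vN m k = (TS m k).card := by
  unfold vN TS
  rw [Finset.card_eq_sum_card_fiberwise (f := fun t => ∏ i, t i)
    (t := Finset.Icc 1 m) ?_]
  · refine Finset.sum_congr rfl fun j hj => ?_
    rw [Finset.mem_Icc] at hj
    rw [dN_eq_of_le hj.1 hj.2]
    congr 1
    ext t
    simp only [Finset.mem_filter, Fintype.mem_piFinset, Finset.mem_Icc]
    constructor
    · rintro ⟨h1, h2⟩
      exact ⟨⟨h1, h2 ▸ hj.2⟩, h2⟩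
    · rintro ⟨⟨h1, _⟩, h2⟩
      exact ⟨h1, h2⟩
  · intro t ht
    rw [Finset.mem_coe, Finset.mem_filter, Fintype.mem_piFinset] at ht
    rw [Finset.mem_coe, Finset.mem_Icc]
    exact ⟨one_le_prod (fun i => ((Finset.mem_Icc.1 (ht.1 i)).1)), ht.2⟩

lemma vN_eq_zero {m k : ℕ} (h : m < 2 ^ k) : vN m k = 0 := by
  rw [vN_eq_card]
  refine Finset.card_eq_zero.2 (Finset.eq_empty_iff_forall_notMem.2 fun t ht => ?_)
  rw [TS, Finset.mem_filter, Fintype.mem_piFinset] at ht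
  have h2 : 2 ^ k ≤ ∏ i, t i := prod_ge_pow fun i => (Finset.mem_Icc.1 (ht.1 i)).1
  omega

lemma card_TS_succ (n k : ℕ) :
    (TS n (k + 1)).card = ∑ ℓ ∈ Finset.Icc 2 n, (TS (n / ℓ) k).card := by
  rw [Finset.card_eq_sum_card_fiberwise (f := fun t => t 0) (t := Finset.Icc 2 n) ?hmap]
  case hmap =>
    intro t ht
    rw [TS, Finset.mem_coe, Finset.mem_filter, Fintype.mem_piFinset] at ht
    exact ht.1 0
  refine Finset.sum_congr rfl fun ℓ hℓ => ?_
  rw [Finset.mem_Icc] at hℓ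
  have hℓpos : 0 < ℓ := by omega
  refine Finset.card_bij' (fun t _ => Fin.tail t) (fun t' _ => Fin.cons ℓ t') ?_ ?_ ?_ ?_
  · intro t ht
    rw [Finset.mem_filter, TS, Finset.mem_filter, Fintype.mem_piFinset] at ht
    obtain ⟨⟨h1, h2⟩, h3⟩ := ht
    have hprod : ∏ i, t i = ℓ * ∏ i, Fin.tail t i := by
      rw [Fin.prod_univ_succ, h3]; rfl
    have htail : ∏ i, Fin.tail t i ≤ n / ℓ := by
      rw [Nat.le_div_iff_mul_le hℓpos, Nat.mul_comm, ← hprod]; exact h2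
    rw [TS, Finset.mem_filter, Fintype.mem_piFinset]
    refine ⟨fun i => ?_, htail⟩
    rw [Finset.mem_Icc]
    have h2i : 2 ≤ Fin.tail t i := (Finset.mem_Icc.1 (h1 i.succ)).1
    have hdvd : Fin.tail t i ∣ ∏ i, Fin.tail t i :=
      Finset.dvd_prod_of_mem _ (Finset.mem_univ i)
    have hle : Fin.tail t i ≤ ∏ i, Fin.tail t i :=
      Nat.le_of_dvd (one_le_prod fun i => (Finset.mem_Icc.1 (h1 i.succ)).1) hdvd
    exact ⟨h2i, le_trans hle htail⟩
  · intro t' ht'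
    rw [TS, Finset.mem_filter, Fintype.mem_piFinset] at ht'
    obtain ⟨h1, h2⟩ := ht'
    rw [Finset.mem_filter, TS, Finset.mem_filter, Fintype.mem_piFinset]
    have hprod : ∏ i, Fin.cons (α := fun _ => ℕ) ℓ t' i = ℓ * ∏ i, t' i := by
      rw [Fin.prod_univ_succ]; rfl
    refine ⟨⟨fun i => ?_, ?_⟩, by simp⟩
    · refine Fin.cases ?_ ?_ i
      · simp only [Fin.cons_zero, Finset.mem_Icc]; exact hℓ
      · intro j
        simp only [Fin.cons_succ, Finset.mem_Icc]
        have := Finset.mem_Icc.1 (h1 j)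
        exact ⟨this.1, le_trans this.2 (Nat.div_le_self n ℓ)⟩
    · rw [hprod, Nat.mul_comm, ← Nat.le_div_iff_mul_le hℓpos]; exact h2
  · intro t ht
    rw [Finset.mem_filter] at ht
    have h := Fin.cons_self_tail (α := fun _ => ℕ) t
    rw [show t 0 = ℓ from ht.2] at h
    exact h
  · intro t' _
    exact Fin.tail_cons (α := fun _ => ℕ) ℓ t'

lemma vN_succ (n k : ℕ) :
    vN n (k + 1) = ∑ ℓ ∈ Finset.Icc 2 n, vN (n / ℓ) k := by
  rw [vN_eq_card, card_TS_succ]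
  exact Finset.sum_congr rfl fun ℓ _ => (vN_eq_card _ _).symm

lemma fiber_eq (n j : ℕ) (hj1 : 1 ≤ j) (hj2 : j ≤ Nat.sqrt n) :
    (Finset.Icc (n / (Nat.sqrt n + 1) + 1) n).filter (fun ℓ => n / ℓ = j)
      = Finset.Icc (n / (j + 1) + 1) (n / j) := by
  ext ℓ
  simp only [Finset.mem_filter, Finset.mem_Icc]
  constructor
  · rintro ⟨⟨h1, h2⟩, h3⟩
    have hℓpos : 0 < ℓ := lt_of_lt_of_le (Nat.succ_pos _) h1
    have hjnl : j ≤ n / ℓ := le_of_eq h3.symm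
    have hjln : j * ℓ ≤ n := (Nat.le_div_iff_mul_le hℓpos).mp hjnl
    constructor
    · by_contra hc
      push_neg at hc
      have hls : ℓ ≤ n / (j + 1) := by omega
      have h4 : ℓ * (j + 1) ≤ n := (Nat.le_div_iff_mul_le (by omega)).mp hls
      have h5 : j + 1 ≤ n / ℓ := (Nat.le_div_iff_mul_le hℓpos).mpr (by
        calc (j + 1) * ℓ = ℓ * (j + 1) := Nat.mul_comm _ _
          _ ≤ n := h4)
      omega
    · exact (Nat.le_div_iff_mul_le hj1).mpr (by
        calc ℓ * j = j * ℓ := Nat.mul_comm _ _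
          _ ≤ n := hjln)
  · rintro ⟨hlo, hhi⟩
    have hℓpos : 0 < ℓ := lt_of_lt_of_le (Nat.succ_pos _) hlo
    have hln : ℓ * j ≤ n := (Nat.le_div_iff_mul_le hj1).mp hhi
    have hjle : j ≤ n / ℓ := (Nat.le_div_iff_mul_le hℓpos).mpr (by
      calc j * ℓ = ℓ * j := Nat.mul_comm _ _
        _ ≤ n := hln)
    have hjlt : n / ℓ < j + 1 := by
      by_contra hc
      push_neg at hc
      have h4 : (j + 1) * ℓ ≤ n := (Nat.le_div_iff_mul_le hℓpos).mp hc
      have h5 : ℓ ≤ n / (j + 1) := (Nat.le_div_iff_mul_le (by omega)).mpr (by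
        calc ℓ * (j + 1) = (j + 1) * ℓ := Nat.mul_comm _ _
          _ ≤ n := h4)
      omega
    have heq : n / ℓ = j := by omega
    refine ⟨⟨?_, le_trans hhi (Nat.div_le_self n j)⟩, heq⟩
    by_contra hc
    push_neg at hc
    have hs : ℓ ≤ n / (Nat.sqrt n + 1) := by omega
    have h4 : ℓ * (Nat.sqrt n + 1) ≤ n := (Nat.le_div_iff_mul_le (by omega)).mp hs
    have h5 : Nat.sqrt n + 1 ≤ n / ℓ := (Nat.le_div_iff_mul_le hℓpos).mpr (by
      calc (Nat.sqrt n + 1) * ℓ = ℓ * (Nat.sqrt n + 1) := Nat.mul_comm _ _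
        _ ≤ n := h4)
    omega

lemma maps_to_sqrt (n : ℕ) :
    ∀ ℓ ∈ Finset.Icc (n / (Nat.sqrt n + 1) + 1) n, n / ℓ ∈ Finset.Icc 1 (Nat.sqrt n) := by
  intro ℓ hℓ
  rw [Finset.mem_Icc] at hℓ ⊢
  obtain ⟨h1, h2⟩ := hℓ
  have hℓpos : 0 < ℓ := lt_of_lt_of_le (Nat.succ_pos _) h1
  constructor
  · exact (Nat.le_div_iff_mul_le hℓpos).mpr (by omega)
  · by_contra hc
    push_neg at hc
    have h3 : (Nat.sqrt n + 1) * ℓ ≤ n := (Nat.le_div_iff_mul_le hℓpos).mp (by omega)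
    have h4 : ℓ ≤ n / (Nat.sqrt n + 1) := (Nat.le_div_iff_mul_le (by omega)).mpr (by
      calc ℓ * (Nat.sqrt n + 1) = (Nat.sqrt n + 1) * ℓ := Nat.mul_comm _ _
        _ ≤ n := h3)
    omega

lemma group_tail (n : ℕ) (f : ℕ → ℕ) :
    ∑ ℓ ∈ Finset.Icc (n / (Nat.sqrt n + 1) + 1) n, f (n / ℓ)
      = ∑ j ∈ Finset.Icc 1 (Nat.sqrt n), (n / j - n / (j + 1)) * f j := by
  rw [← Finset.sum_fiberwise_of_maps_to (g := fun ℓ => n / ℓ) (maps_to_sqrt n)]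
  refine Finset.sum_congr rfl fun j hj => ?_
  rw [Finset.mem_Icc] at hj
  have hcongr : ∑ ℓ ∈ (Finset.Icc (n / (Nat.sqrt n + 1) + 1) n).filter (fun ℓ => n / ℓ = j),
      f (n / ℓ) = ∑ ℓ ∈ (Finset.Icc (n / (Nat.sqrt n + 1) + 1) n).filter
        (fun ℓ => n / ℓ = j), f j := by
    refine Finset.sum_congr rfl fun ℓ hℓ => ?_
    rw [Finset.mem_filter] at hℓ
    rw [hℓ.2]
  rw [hcongr, Finset.sum_const, fiber_eq n j hj.1 hj.2, Nat.card_Icc, smul_eq_mul]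
  congr 1
  omega

/-- The hyperbola-method recurrence: if `k ≥ 1` and `2^k ≤ n`, then
`v(n,k) = ∑_{i=2}^{s} v(⌊n/i⌋, k-1)
        + ∑_{j=2^{k-1}}^{⌊√n⌋} (⌊n/j⌋ - ⌊n/(j+1)⌋) v(j, k-1)`,
where `s = ⌊n/(⌊√n⌋+1)⌋`. -/
theorem vN_hyperbola (n k : ℕ) (hk : 1 ≤ k) (hn : 2 ^ k ≤ n) :
    vN n k = ∑ i ∈ Finset.Icc 2 (n / (Nat.sqrt n + 1)), vN (n / i) (k - 1)
      + ∑ j ∈ Finset.Icc (2 ^ (k - 1)) (Nat.sqrt n),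
          (n / j - n / (j + 1)) * vN j (k - 1) := by
  obtain ⟨k', rfl⟩ : ∃ k', k = k' + 1 := ⟨k - 1, (Nat.succ_pred_eq_of_pos hk).symm⟩
  simp only [Nat.add_sub_cancel]
  have hn2 : 2 ≤ n := le_trans (by
    calc (2:ℕ) = 2 ^ 1 := (pow_one 2).symm
      _ ≤ 2 ^ (k' + 1) := Nat.pow_le_pow_right (by norm_num) (by omega)) hn
  set s := n / (Nat.sqrt n + 1) with hs
  have hs1 : 1 ≤ s := by
    have hlt := Nat.sqrt_lt_self (by omega : 1 < n)
    rw [hs]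
    exact (Nat.le_div_iff_mul_le (by omega)).mpr (by omega)
  have hs2 : s ≤ n := Nat.div_le_self _ _
  rw [vN_succ]
  have hsplit : ∑ ℓ ∈ Finset.Icc 2 n, vN (n / ℓ) k'
      = ∑ ℓ ∈ Finset.Icc 2 s, vN (n / ℓ) k'
        + ∑ ℓ ∈ Finset.Icc (s + 1) n, vN (n / ℓ) k' := by
    have h1 : Finset.Icc 2 n = Finset.Ioc 1 n := (Finset.Icc_add_one_left_eq_Ioc 1 n)
    have h2 : Finset.Icc 2 s = Finset.Ioc 1 s := (Finset.Icc_add_one_left_eq_Ioc 1 s)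
    have h3 : Finset.Icc (s + 1) n = Finset.Ioc s n := (Finset.Icc_add_one_left_eq_Ioc s n)
    rw [h1, h2, h3, Finset.sum_Ioc_consecutive _ hs1 hs2]
  rw [hsplit, group_tail n (fun j => vN j k')]
  congr 1
  refine (Finset.sum_subset ?_ ?_).symm
  · intro j hj
    rw [Finset.mem_Icc] at hj ⊢
    exact ⟨le_trans Nat.one_le_two_pow hj.1, hj.2⟩
  · intro j hj1 hj2
    rw [Finset.mem_Icc] at hj1
    rw [Finset.mem_Icc, not_and_or] at hj2
    have : j < 2 ^ k' := by omega
    rw [vN_eq_zero this, Nat.mul_zero]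
end

section
/- For every n ≥ 1, the Mertens function satisfies Σ_{i=1}^{n} μ(i) = Σ_{k=0}^{⌊log₂ n⌋} (−1)^k v(n,k), where v(n,0) = 1. -/
lemma dN_box (M m k : ℕ) (hm : 1 ≤ m) (hM : m ≤ M) :
    ((Fintype.piFinset fun _ : Fin k => Finset.Icc 2 M).filter
      (fun t => ∏ i, t i = m)).card = dN m k := by
  unfold dN
  congr 1
  ext t
  simp only [Finset.mem_filter, Fintype.mem_piFinset, Finset.mem_Icc]
  constructor
  · rintro ⟨h1, h2⟩
    refine ⟨fun i => ⟨(h1 i).1, ?_⟩, h2⟩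
    have : t i ∣ m := h2 ▸ Finset.dvd_prod_of_mem t (Finset.mem_univ i)
    exact Nat.le_of_dvd hm this
  · rintro ⟨h1, h2⟩
    exact ⟨fun i => ⟨(h1 i).1, le_trans (h1 i).2 hM⟩, h2⟩

lemma dN_succ (m k : ℕ) (hm : 1 ≤ m) :
    dN m (k + 1) = ∑ d ∈ m.properDivisors, dN d k := by
  have hbox : ∀ d ∈ m.properDivisors, dN d k =
      ((Fintype.piFinset fun _ : Fin k => Finset.Icc 2 m).filter
        (fun t => ∏ i, t i = d)).card := by
    intro d hd
    rw [Nat.mem_properDivisors] at hd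
    have hd0 : 0 < d := Nat.pos_of_dvd_of_pos hd.1 hm
    rw [dN_box m d k hd0 (le_of_lt hd.2)]
  rw [Finset.sum_congr rfl hbox, ← Finset.card_sigma]
  unfold dN
  apply Finset.card_nbij' (i := fun t => ⟨∏ i, Fin.init t i, Fin.init t⟩)
    (j := fun p => Fin.snoc p.2 (m / p.1))
  · -- forward membership
    intro t ht
    simp only [Finset.mem_coe, Finset.mem_filter, Fintype.mem_piFinset, Finset.mem_Icc] at ht
    obtain ⟨hmem, hprod⟩ := ht
    set d := ∏ i, Fin.init t i with hdd
    have hsplit : d * t (Fin.last k) = m := by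
      rw [hdd]
      rw [← hprod, Fin.prod_univ_castSucc]
      rfl
    have hd0 : 0 < d := Finset.prod_pos (fun i _ => by
      have := (hmem (Fin.castSucc i)).1
      simp only [Fin.init]
      omega)
    have hl2 : 2 ≤ t (Fin.last k) := (hmem _).1
    have hdm : d < m := by nlinarith
    simp only [Finset.mem_coe, Finset.mem_sigma, Nat.mem_properDivisors, Finset.mem_filter,
      Fintype.mem_piFinset, Finset.mem_Icc]
    refine ⟨⟨⟨_, hsplit.symm⟩, hdm⟩, fun i => ?_, trivial⟩
    exact hmem (Fin.castSucc i)
  · -- backward membership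
    rintro ⟨d, s⟩ hp
    simp only [Finset.mem_coe, Finset.mem_sigma, Nat.mem_properDivisors, Finset.mem_filter,
      Fintype.mem_piFinset, Finset.mem_Icc] at hp
    obtain ⟨⟨hdvd, hdm⟩, hmem, hprod⟩ := hp
    have hd0 : 0 < d := Nat.pos_of_dvd_of_pos hdvd hm
    have hmul : d * (m / d) = m := Nat.mul_div_cancel' hdvd
    have hl1 : 1 ≤ m / d := Nat.div_pos (Nat.le_of_dvd hm hdvd) hd0
    have hl2 : 2 ≤ m / d := by
      rcases Nat.lt_or_ge (m / d) 2 with h | h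
      · interval_cases h' : (m / d) <;> omega
      · exact h
    have hlm : m / d ≤ m := Nat.div_le_self m d
    simp only [Finset.mem_coe, Finset.mem_filter, Fintype.mem_piFinset, Finset.mem_Icc]
    constructor
    · intro i
      refine Fin.lastCases ?_ (fun j => ?_) i
      · simp only [Fin.snoc_last]; exact ⟨hl2, hlm⟩
      · simp only [Fin.snoc_castSucc]
        exact hmem j
    · rw [Fin.prod_univ_castSucc]
      simp only [Fin.snoc_castSucc, Fin.snoc_last]
      rw [hprod]; exact hmul
  · -- left inverse
    intro t ht
    simp only [Finset.mem_coe, Finset.mem_filter, Fintype.mem_piFinset, Finset.mem_Icc] at ht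
    obtain ⟨hmem, hprod⟩ := ht
    have hsplit : (∏ i, Fin.init t i) * t (Fin.last k) = m := by
      rw [← hprod, Fin.prod_univ_castSucc]; rfl
    have hd0 : 0 < ∏ i, Fin.init t i := Finset.prod_pos (fun i _ => by
      have := (hmem (Fin.castSucc i)).1
      simp only [Fin.init]
      omega)
    have : m / (∏ i, Fin.init t i) = t (Fin.last k) := by
      rw [← hsplit, Nat.mul_div_cancel_left _ hd0]
    simp only [this]
    exact Fin.snoc_init_self t
  · -- right inverse
    rintro ⟨d, s⟩ hp
    simp only [Finset.mem_coe, Finset.mem_sigma, Finset.mem_filter] at hp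
    simp only [Fin.init_snoc, hp.2.2]

lemma dN_eq_zero (m k : ℕ) (h : m < 2 ^ k) : dN m k = 0 := by
  unfold dN
  rw [Finset.card_eq_zero, Finset.filter_eq_empty_iff]
  intro t ht hprod
  have h2 : ∀ i, 2 ≤ t i := fun i => (Finset.mem_Icc.mp (Fintype.mem_piFinset.mp ht i)).1
  have : (2 : ℕ) ^ k ≤ ∏ i, t i := by
    calc (2:ℕ)^k = ∏ _i : Fin k, 2 := by simp
    _ ≤ ∏ i, t i := Finset.prod_le_prod' fun i _ => h2 i
  omega

lemma dN_zero (m : ℕ) : dN m 0 = if m = 1 then 1 else 0 := by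
  unfold dN
  by_cases h : m = 1 <;> simp [h, Finset.filter_eq_empty_iff] <;> omega

noncomputable def gN (m : ℕ) : ℤ := ∑ k ∈ Finset.range (m + 1), (-1 : ℤ) ^ k * (dN m k : ℤ)

lemma sum_stable (m : ℕ) {K K' : ℕ} (h : m < 2 ^ K) (hKK : K ≤ K') :
    ∑ k ∈ Finset.range K', (-1 : ℤ) ^ k * (dN m k : ℤ) =
      ∑ k ∈ Finset.range K, (-1 : ℤ) ^ k * (dN m k : ℤ) := by
  rw [← Finset.sum_subset (Finset.range_subset_range.mpr hKK)]
  intro x hx hx'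
  simp only [Finset.mem_range] at hx hx'
  have : m < 2 ^ x := lt_of_lt_of_le h (Nat.pow_le_pow_right (by norm_num) (by omega))
  simp [dN_eq_zero m x this]

lemma sum_ext (m : ℕ) {K K' : ℕ} (h : m < 2 ^ K) (h' : m < 2 ^ K') :
    ∑ k ∈ Finset.range K', (-1 : ℤ) ^ k * (dN m k : ℤ) =
      ∑ k ∈ Finset.range K, (-1 : ℤ) ^ k * (dN m k : ℤ) := by
  rcases le_total K K' with hle | hle
  · exact sum_stable m h hle
  · exact (sum_stable m h' hle).symm

lemma sum_eq_gN (m : ℕ) {K : ℕ} (h : m < 2 ^ K) :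
    ∑ k ∈ Finset.range K, (-1 : ℤ) ^ k * (dN m k : ℤ) = gN m := by
  unfold gN
  exact sum_ext m (Nat.lt_of_lt_of_le (Nat.lt_two_pow_self (n := m))
    (Nat.pow_le_pow_right (by norm_num) (Nat.le_succ m))) h

lemma gN_rec (m : ℕ) (hm : 1 ≤ m) :
    gN m = (if m = 1 then 1 else 0) - ∑ d ∈ m.properDivisors, gN d := by
  unfold gN
  rw [Finset.sum_range_succ']
  have h0 : (-1 : ℤ) ^ 0 * (dN m 0 : ℤ) = if m = 1 then 1 else 0 := by
    rw [dN_zero]; split <;> simp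
  rw [h0]
  have hstep : ∀ k ∈ Finset.range m, (-1 : ℤ) ^ (k + 1) * (dN m (k + 1) : ℤ) =
      -∑ d ∈ m.properDivisors, (-1 : ℤ) ^ k * (dN d k : ℤ) := by
    intro k _
    rw [dN_succ m k hm]
    push_cast
    rw [Finset.mul_sum, pow_succ]
    rw [← Finset.sum_neg_distrib]
    exact Finset.sum_congr rfl fun d _ => by ring
  rw [Finset.sum_congr rfl hstep]
  have hg : ∑ d ∈ m.properDivisors, ∑ k ∈ Finset.range (d + 1), (-1 : ℤ) ^ k * (dN d k : ℤ) =
      ∑ d ∈ m.properDivisors, ∑ k ∈ Finset.range m, (-1 : ℤ) ^ k * (dN d k : ℤ) :=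
    Finset.sum_congr rfl fun d hd => (sum_ext d
      (Nat.lt_of_lt_of_le (Nat.lt_two_pow_self (n := d)) (Nat.pow_le_pow_right (by norm_num) (Nat.le_succ d)))
      (Nat.lt_trans (Nat.mem_properDivisors.mp hd).2 (Nat.lt_two_pow_self (n := m)))).symm
  rw [hg, Finset.sum_comm, Finset.sum_neg_distrib]
  ring

lemma moebius_rec (m : ℕ) (hm : 1 ≤ m) :
    (ArithmeticFunction.moebius m : ℤ) =
      (if m = 1 then 1 else 0) - ∑ d ∈ m.properDivisors, (ArithmeticFunction.moebius d : ℤ) := by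
  have h := congrArg (fun f : ArithmeticFunction ℤ => f m) ArithmeticFunction.moebius_mul_coe_zeta
  simp only [ArithmeticFunction.coe_mul_zeta_apply, ArithmeticFunction.one_apply] at h
  rw [← Nat.cons_self_properDivisors (by omega : m ≠ 0), Finset.sum_cons] at h
  omega

lemma gN_eq_moebius : ∀ m : ℕ, 1 ≤ m → gN m = ArithmeticFunction.moebius m := by
  intro m
  induction m using Nat.strong_induction_on with
  | _ m ih =>
    intro hm
    rw [gN_rec m hm, moebius_rec m hm]
    congr 1
    refine Finset.sum_congr rfl fun d hd => ?_
    have hd' := Nat.mem_properDivisors.mp hd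
    exact ih d hd'.2 (Nat.pos_of_dvd_of_pos hd'.1 hm)

/-- For every `n ≥ 1`, the Mertens function satisfies
`∑_{i=1}^{n} μ(i) = ∑_{k=0}^{⌊log₂ n⌋} (-1)^k v(n,k)`. -/
theorem mertens_eq_alternating_sum (n : ℕ) (hn : 1 ≤ n) :
    ∑ i ∈ Finset.Icc 1 n, ArithmeticFunction.moebius i =
      ∑ k ∈ Finset.range (Nat.log 2 n + 1), (-1 : ℤ) ^ k * (vN n k : ℤ) := by
  have hv : ∀ k, ((vN n k : ℤ)) = ∑ j ∈ Finset.Icc 1 n, (dN j k : ℤ) := by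
    intro k; unfold vN; push_cast; rfl
  rw [show ∑ k ∈ Finset.range (Nat.log 2 n + 1), (-1 : ℤ) ^ k * (vN n k : ℤ) =
      ∑ k ∈ Finset.range (Nat.log 2 n + 1), ∑ j ∈ Finset.Icc 1 n, (-1 : ℤ) ^ k * (dN j k : ℤ) from
    Finset.sum_congr rfl fun k _ => by rw [hv k, Finset.mul_sum]]
  rw [Finset.sum_comm]
  refine Finset.sum_congr rfl fun j hj => ?_
  have hj' := Finset.mem_Icc.mp hj
  have hjn : j < 2 ^ (Nat.log 2 n + 1) :=
    Nat.lt_of_le_of_lt hj'.2 (Nat.lt_pow_succ_log_self (by norm_num) n)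
  rw [sum_eq_gN j hjn, gN_eq_moebius j hj'.1]
end
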